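/- Let (X,ρ) be a quasi-metric space with quasi-triangle constant A₀ and let {D^t : t = 1,…,T} be a collection of adjacent systems of dyadic cubes with parameters δ ≤ (96A₀⁶)^{-1}, c₁ = (12A₀⁴)^{-1}, C₁ = 4A₀², C = 8A₀³δ^{-3}, such that in addition each system D^t has center points satisfying min_α ρ(x, x^k_α) < 2A₀δ^k for all x ∈ X and k ∈ ℤ. If a weight ω is dyadic doubling with constant C_dydbl with respect to each system D^t, t = 1,…,T, then ω is a doubling weight: for all x ∈ X and r > 0, 0 < ω(B(x,2r)) ≤ (C_dydbl)^N ω(B(x,r)) < ∞, where N := ⌈log(16A₀³/δ⁴)/log(1/δ)⌉. -/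

import Mathlib

open MeasureTheory Set
open scoped ENNReal

universe u

/-- A quasi-metric on `X` with quasi-triangle constant `A₀`. -/
structure IsQuasiMetric {X : Type u} (ρ : X → X → ℝ) (A₀ : ℝ) : Prop where
  one_le : 1 ≤ A₀
  nonneg : ∀ x y, 0 ≤ ρ x y
  symm : ∀ x y, ρ x y = ρ y x
  eq_zero_iff : ∀ x y, ρ x y = 0 ↔ x = y
  triangle : ∀ x y z, ρ x y ≤ A₀ * (ρ x z + ρ z y)

/-- The quasi-metric ball `B(x,r)`. -/
def qball {X : Type u} (ρ : X → X → ℝ) (x : X) (r : ℝ) : Set X := {y | ρ x y < r}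

/-- A system of dyadic cubes on `(X,ρ)` with parameters `δ ∈ (0,1)`, `0 < c₁ ≤ C₁ < ∞`. -/
structure DyadicSystem (X : Type u) [MeasurableSpace X] (ρ : X → X → ℝ)
    (δ c₁ C₁ : ℝ) where
  idx : ℤ → Set (Set X)
  center : ℤ → Set X → X
  countable : ∀ k, (idx k).Countable
  measurableSet : ∀ k, ∀ Q ∈ idx k, MeasurableSet Q
  cover : ∀ k, ⋃₀ idx k = Set.univ
  pairwiseDisjoint : ∀ k, ∀ Q ∈ idx k, ∀ Q' ∈ idx k, Q ≠ Q' → Disjoint Q Q'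
  nested : ∀ k ℓ : ℤ, k ≤ ℓ → ∀ Q ∈ idx k, ∀ R ∈ idx ℓ, R ⊆ Q ∨ Disjoint R Q
  nchild : ℕ
  children_card : ∀ k, ∀ Q ∈ idx k,
    1 ≤ {R | R ∈ idx (k + 1) ∧ R ⊆ Q}.ncard ∧ {R | R ∈ idx (k + 1) ∧ R ⊆ Q}.ncard ≤ nchild
  children_union : ∀ k, ∀ Q ∈ idx k, Q = ⋃₀ {R | R ∈ idx (k + 1) ∧ R ⊆ Q}
  center_mem : ∀ k, ∀ Q ∈ idx k, center k Q ∈ Q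
  ball_subset : ∀ k, ∀ Q ∈ idx k, qball ρ (center k Q) (c₁ * δ ^ k) ⊆ Q
  subset_ball : ∀ k, ∀ Q ∈ idx k, Q ⊆ qball ρ (center k Q) (C₁ * δ ^ k)

/-- `D` has the distinguished center point property with distinguished point `x₀`. -/
def DyadicSystem.DistinguishedPoint {X : Type u} [MeasurableSpace X] {ρ : X → X → ℝ}
    {δ c₁ C₁ : ℝ} (D : DyadicSystem X ρ δ c₁ C₁) (x₀ : X) : Prop :=
  ∀ k : ℤ, ∃ Q ∈ D.idx k, D.center k Q = x₀

/-- The doubling condition for a Borel measure on a quasi-metric space. -/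
def IsDoublingMeasure {X : Type u} [MeasurableSpace X] (ρ : X → X → ℝ)
    (μ : Measure X) (Cμ : ℝ≥0∞) : Prop :=
  ∀ (x : X) (r : ℝ), 0 < r →
    0 < μ (qball ρ x (2 * r)) ∧
    μ (qball ρ x (2 * r)) ≤ Cμ * μ (qball ρ x r) ∧
    μ (qball ρ x r) < ⊤

/-- A collection of adjacent systems of dyadic cubes with comparability constant `C`. -/
def AdjacentSystems {X : Type u} [MeasurableSpace X] (ρ : X → X → ℝ)
    {δ c₁ C₁ : ℝ} {T : ℕ} (D : Fin T → DyadicSystem X ρ δ c₁ C₁) (C : ℝ) : Prop :=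
  ∀ (x : X) (r : ℝ) (k : ℤ), δ ^ (k + 3) < r → r ≤ δ ^ (k + 2) →
    ∃ t : Fin T, ∃ Q ∈ (D t).idx k, qball ρ x r ⊆ Q ∧ Q ⊆ qball ρ x (C * r)

/-- A weight that is dyadic doubling with constant `C_dydbl` with
respect to each of the adjacent systems of dyadic cubes (with the parameters of the
Hytönen–Kairema construction and the density of center points) is a doubling weight,
with doubling constant `C_dydbl^N` where `N = ⌈log(16A₀³/δ⁴)/log(1/δ)⌉`. -/
theorem statement8 {X : Type u} [MeasurableSpace X] (ρ : X → X → ℝ) (A₀ : ℝ)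
    (hρ : IsQuasiMetric ρ A₀) (δ : ℝ) (hδ0 : 0 < δ) (hδ : δ ≤ (96 * A₀ ^ 6)⁻¹)
    (T : ℕ) (D : Fin T → DyadicSystem X ρ δ (12 * A₀ ^ 4)⁻¹ (4 * A₀ ^ 2))
    (hadj : AdjacentSystems ρ D (8 * A₀ ^ 3 / δ ^ 3))
    (hcenter : ∀ (t : Fin T) (x : X) (k : ℤ),
      ∃ Q ∈ (D t).idx k, ρ x ((D t).center k Q) < 2 * A₀ * δ ^ k)
    (μ : Measure X) (ω : X → ℝ≥0∞) (hω : Measurable ω) (Cdydbl : ℝ≥0∞)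
    (hdydbl : ∀ (t : Fin T) (k : ℤ), ∀ Q ∈ (D t).idx k, ∀ Q' ∈ (D t).idx (k + 1),
      Q' ⊆ Q →
        0 < ∫⁻ y in Q, ω y ∂μ ∧
        ∫⁻ y in Q, ω y ∂μ ≤ Cdydbl * ∫⁻ y in Q', ω y ∂μ ∧
        Cdydbl * ∫⁻ y in Q', ω y ∂μ < ⊤) :
    ∀ (x : X) (r : ℝ), 0 < r →
      0 < ∫⁻ y in qball ρ x (2 * r), ω y ∂μ ∧
      ∫⁻ y in qball ρ x (2 * r), ω y ∂μ ≤
        Cdydbl ^ (⌈Real.log (16 * A₀ ^ 3 / δ ^ 4) / Real.log (1 / δ)⌉₊) *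
          ∫⁻ y in qball ρ x r, ω y ∂μ ∧
      Cdydbl ^ (⌈Real.log (16 * A₀ ^ 3 / δ ^ 4) / Real.log (1 / δ)⌉₊) *
          ∫⁻ y in qball ρ x r, ω y ∂μ < ⊤ := by
  
  intro x r hr
  have hA1 : 1 ≤ A₀ := hρ.one_le
  have hApos : 0 < A₀ := lt_of_lt_of_le one_pos hA1
  have hA6 : (1:ℝ) ≤ A₀ ^ 6 := one_le_pow₀ hA1
  have hδ1 : δ < 1 := by
    have h96 : (96:ℝ) ≤ 96 * A₀ ^ 6 := by nlinarith
    have hinv : (96 * A₀ ^ 6)⁻¹ ≤ (96:ℝ)⁻¹ := by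
      apply inv_anti₀ (by norm_num) h96
    have := hδ.trans hinv
    norm_num at this
    linarith
  have hδne : δ ≠ 0 := ne_of_gt hδ0
  have hlogδ : Real.log δ < 0 := Real.log_neg hδ0 hδ1
  have h2r : 0 < 2 * r := by linarith
  set N : ℕ := ⌈Real.log (16 * A₀ ^ 3 / δ ^ 4) / Real.log (1 / δ)⌉₊ with hNdef
  have hNb : 16 * A₀ ^ 3 * δ ^ N ≤ δ ^ 4 := by
    have hlog1δ : 0 < Real.log (1 / δ) := by
      rw [one_div, Real.log_inv]; linarith
    have ha : (0:ℝ) < 16 * A₀ ^ 3 / δ ^ 4 := by positivity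
    have hceil : Real.log (16 * A₀ ^ 3 / δ ^ 4) / Real.log (1 / δ) ≤ (N:ℝ) := Nat.le_ceil _
    have h1 : Real.log (16 * A₀ ^ 3 / δ ^ 4) ≤ (N:ℝ) * Real.log (1 / δ) :=
      (div_le_iff₀ hlog1δ).mp hceil
    have h2 : Real.log (16 * A₀ ^ 3 / δ ^ 4) ≤ Real.log ((1/δ) ^ N) := by
      rw [Real.log_pow]; exact h1
    have h3 : 16 * A₀ ^ 3 / δ ^ 4 ≤ (1/δ) ^ N := by
      calc 16 * A₀ ^ 3 / δ ^ 4 = Real.exp (Real.log (16 * A₀ ^ 3 / δ ^ 4)) :=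
            (Real.exp_log ha).symm
        _ ≤ Real.exp (Real.log ((1/δ) ^ N)) := Real.exp_le_exp.mpr h2
        _ = (1/δ) ^ N := Real.exp_log (by positivity)
    rw [div_pow, one_pow, div_le_div_iff₀ (by positivity) (by positivity)] at h3
    linarith
  set m : ℤ := ⌊Real.log (2 * r) / Real.log δ⌋ with hmdef
  set k : ℤ := m - 2 with hkdef
  have hup : 2 * r ≤ δ ^ (k + 2) := by
    have h1 : (m:ℝ) ≤ Real.log (2*r) / Real.log δ := Int.floor_le _
    have h2 : Real.log (2*r) ≤ (m:ℝ) * Real.log δ := (le_div_iff_of_neg hlogδ).mp h1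
    have he : (k + 2 : ℤ) = m := by rw [hkdef]; ring
    rw [he]
    calc 2*r = Real.exp (Real.log (2*r)) := (Real.exp_log h2r).symm
      _ ≤ Real.exp ((m:ℝ) * Real.log δ) := Real.exp_le_exp.mpr h2
      _ = δ ^ m := by rw [← Real.log_zpow, Real.exp_log (zpow_pos hδ0 _)]
  have hlow : δ ^ (k + 3) < 2 * r := by
    have h1 : Real.log (2*r) / Real.log δ < (m:ℝ) + 1 := Int.lt_floor_add_one _
    have h2 : ((m:ℝ) + 1) * Real.log δ < Real.log (2*r) := (div_lt_iff_of_neg hlogδ).mp h1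
    have he : (k + 3 : ℤ) = m + 1 := by rw [hkdef]; ring
    rw [he]
    have hrw : δ ^ (m + 1 : ℤ) = Real.exp (((m + 1 : ℤ):ℝ) * Real.log δ) := by
      rw [← Real.log_zpow, Real.exp_log (zpow_pos hδ0 _)]
    rw [hrw]
    calc Real.exp (((m + 1 : ℤ):ℝ) * Real.log δ) < Real.exp (Real.log (2*r)) := by
          apply Real.exp_lt_exp.mpr; push_cast; exact h2
      _ = 2*r := Real.exp_log h2r
  obtain ⟨t, Q, hQ, hBQ, -⟩ := hadj x (2*r) k hlow hup
  have hxB : x ∈ qball ρ x (2*r) := by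
    show ρ x x < 2*r
    rw [(hρ.eq_zero_iff x x).mpr rfl]; exact h2r
  have hxQ : x ∈ Q := hBQ hxB
  have child : ∀ (j : ℤ), ∀ R ∈ (D t).idx j, ∃ S ∈ (D t).idx (j+1), S ⊆ R := by
    intro j R hR
    have hc := (D t).center_mem j R hR
    rw [(D t).children_union j R hR] at hc
    obtain ⟨S, hS, -⟩ := hc
    exact ⟨S, hS.1, hS.2⟩
  have cube_pos : ∀ (j : ℤ), ∀ R ∈ (D t).idx j, 0 < ∫⁻ y in R, ω y ∂μ := by
    intro j R hR
    obtain ⟨S, hS, hSR⟩ := child j R hR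
    exact (hdydbl t j R hR S hS hSR).1
  have cube_fin : ∀ (j : ℤ), ∀ R ∈ (D t).idx j, ∫⁻ y in R, ω y ∂μ < ⊤ := by
    intro j R hR
    obtain ⟨S, hS, hSR⟩ := child j R hR
    exact lt_of_le_of_lt (hdydbl t j R hR S hS hSR).2.1 (hdydbl t j R hR S hS hSR).2.2
  have hCtop : Cdydbl ≠ ⊤ := by
    obtain ⟨S, hS, hSQ⟩ := child k Q hQ
    have h1 := (hdydbl t k Q hQ S hS hSQ).2.2
    intro h
    rw [h, ENNReal.top_mul (cube_pos _ S hS).ne'] at h1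
    exact (lt_irrefl ⊤) h1
  have mem_cube : ∀ (j : ℤ), ∃ R ∈ (D t).idx j, x ∈ R := by
    intro j
    have hx : x ∈ ⋃₀ (D t).idx j := by rw [(D t).cover j]; trivial
    obtain ⟨R, hR, hxR⟩ := hx
    exact ⟨R, hR, hxR⟩
  have key : ∀ n : ℕ, ∃ R ∈ (D t).idx (k + (n:ℤ)), x ∈ R ∧
      ∫⁻ y in Q, ω y ∂μ ≤ Cdydbl ^ n * ∫⁻ y in R, ω y ∂μ := by
    intro n
    induction n with
    | zero => exact ⟨Q, by simpa using hQ, hxQ, by simp⟩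
    | succ n ih =>
      obtain ⟨R, hR, hxR, hle⟩ := ih
      obtain ⟨S, hS, hxS⟩ := mem_cube (k + (n:ℤ) + 1)
      have hSR : S ⊆ R := by
        rcases (D t).nested (k + (n:ℤ)) (k + (n:ℤ) + 1) (by omega) R hR S hS with h | h
        · exact h
        · exact absurd hxR (Set.disjoint_left.mp h hxS)
      have hd := hdydbl t (k + (n:ℤ)) R hR S hS hSR
      have hcast : (k + ((n+1:ℕ):ℤ)) = (k + (n:ℤ)) + 1 := by push_cast; ring
      refine ⟨S, by rw [hcast]; exact hS, hxS, ?_⟩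
      calc ∫⁻ y in Q, ω y ∂μ ≤ Cdydbl ^ n * ∫⁻ y in R, ω y ∂μ := hle
        _ ≤ Cdydbl ^ n * (Cdydbl * ∫⁻ y in S, ω y ∂μ) := mul_le_mul_right hd.2.1 _
        _ = Cdydbl ^ (n+1) * ∫⁻ y in S, ω y ∂μ := by ring
  obtain ⟨R, hR, hxR, hle⟩ := key N
  have hRsub : R ⊆ qball ρ x r := by
    intro y hy
    set c := (D t).center (k + (N:ℤ)) R with hc
    have hδkN : (0:ℝ) < δ ^ (k + (N:ℤ)) := zpow_pos hδ0 _
    have hcx : ρ c x < 4 * A₀ ^ 2 * δ ^ (k + (N:ℤ)) := (D t).subset_ball _ R hR hxR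
    have hcy : ρ c y < 4 * A₀ ^ 2 * δ ^ (k + (N:ℤ)) := (D t).subset_ball _ R hR hy
    show ρ x y < r
    have hsum : ρ x c + ρ c y < 8 * A₀ ^ 2 * δ ^ (k + (N:ℤ)) := by
      rw [hρ.symm x c]; linarith
    have h8 : ρ x y < 8 * A₀ ^ 3 * δ ^ (k + (N:ℤ)) := by
      calc ρ x y ≤ A₀ * (ρ x c + ρ c y) := hρ.triangle x y c
        _ < A₀ * (8 * A₀ ^ 2 * δ ^ (k + (N:ℤ))) := by
            exact mul_lt_mul_of_pos_left hsum hApos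
        _ = 8 * A₀ ^ 3 * δ ^ (k + (N:ℤ)) := by ring
    have hδk : (0:ℝ) < δ ^ k := zpow_pos hδ0 _
    have e1 : δ ^ (k + (N:ℤ)) = δ ^ k * δ ^ N := by
      rw [zpow_add₀ hδne, zpow_natCast]
    have e2 : δ ^ (k + 3 : ℤ) = δ ^ k * δ ^ (3:ℕ) := by
      rw [zpow_add₀ hδne, show (3:ℤ) = ((3:ℕ):ℤ) from rfl, zpow_natCast]
    have s1 : 16 * A₀ ^ 3 * δ ^ N * δ ^ k ≤ δ ^ 4 * δ ^ k :=
      mul_le_mul_of_nonneg_right hNb hδk.le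
    have s2 : δ ^ (4:ℕ) * δ ^ k ≤ δ ^ (3:ℕ) * δ ^ k :=
      mul_le_mul_of_nonneg_right
        (pow_le_pow_of_le_one hδ0.le hδ1.le (by norm_num)) hδk.le
    rw [e1] at h8
    rw [e2] at hlow
    nlinarith
  have hBr_sub : qball ρ x r ⊆ qball ρ x (2*r) := by
    intro y hy
    have h1 : ρ x y < r := hy
    show ρ x y < 2*r
    linarith
  refine ⟨?_, ?_, ?_⟩
  · exact lt_of_lt_of_le (cube_pos _ R hR)
      (lintegral_mono_set (hRsub.trans hBr_sub))
  · calc ∫⁻ y in qball ρ x (2*r), ω y ∂μ ≤ ∫⁻ y in Q, ω y ∂μ := lintegral_mono_set hBQ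
      _ ≤ Cdydbl ^ N * ∫⁻ y in R, ω y ∂μ := hle
      _ ≤ Cdydbl ^ N * ∫⁻ y in qball ρ x r, ω y ∂μ :=
          mul_le_mul_right (lintegral_mono_set hRsub) _
  · apply ENNReal.mul_lt_top (ENNReal.pow_lt_top hCtop.lt_top)
    exact lt_of_le_of_lt (lintegral_mono_set hBr_sub)
      (lt_of_le_of_lt (lintegral_mono_set hBQ) (cube_fin _ Q hQ))
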